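/- Let C ≥ 1 and t > 0 be real numbers, let k ≥ 1 be an integer, and let α be a real number with 0 < α ≤ 1. Then arsinh(C·sinh((k + α)·t)) − arsinh(C·sinh(α·t)) ≥ arsinh(C·sinh(2t)) − arsinh(C·sinh(t)). -/

import Mathlib

open Real

private lemma arsinh_sinh_hasDerivAt (C t x : ℝ) :
    HasDerivAt (fun x => Real.arsinh (C * Real.sinh (x * t)))
      ((Real.sqrt (1 + (C * Real.sinh (x * t)) ^ 2))⁻¹ * (C * (Real.cosh (x * t) * t))) x := by
  have h1 : HasDerivAt (fun x : ℝ => x * t) t x := hasDerivAt_mul_const t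
  have h2 : HasDerivAt (fun x : ℝ => Real.sinh (x * t)) (Real.cosh (x * t) * t) x :=
    by have := (Real.hasDerivAt_sinh (x * t)).comp x h1; exact this
  have h3 : HasDerivAt (fun x : ℝ => C * Real.sinh (x * t)) (C * (Real.cosh (x * t) * t)) x :=
    h2.const_mul C
  have := (Real.hasDerivAt_arsinh (C * Real.sinh (x * t))).comp x h3; exact this

private lemma core_antitone (C : ℝ) (hC : 1 ≤ C) {x y : ℝ} (hx : 0 ≤ x) (hxy : x ≤ y) :
    (Real.sqrt (1 + (C * Real.sinh y) ^ 2))⁻¹ * (C * Real.cosh y) ≤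
      (Real.sqrt (1 + (C * Real.sinh x) ^ 2))⁻¹ * (C * Real.cosh x) := by
  have hC0 : 0 < C := lt_of_lt_of_le one_pos hC
  have hpx : 0 < Real.sqrt (1 + (C * Real.sinh x) ^ 2) := by
    apply Real.sqrt_pos.2; positivity
  have hpy : 0 < Real.sqrt (1 + (C * Real.sinh y) ^ 2) := by
    apply Real.sqrt_pos.2; positivity
  rw [inv_mul_eq_div, inv_mul_eq_div, div_le_div_iff₀ hpy hpx]
  have hsx : 0 ≤ Real.sinh x := by
    have := Real.sinh_le_sinh.2 hx
    simpa using this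
  have hsxy : Real.sinh x ≤ Real.sinh y := Real.sinh_le_sinh.2 hxy
  have hcx : 0 < Real.cosh x := Real.cosh_pos x
  have hcy : 0 < Real.cosh y := Real.cosh_pos y
  have key : (C * Real.cosh y * Real.sqrt (1 + (C * Real.sinh x) ^ 2)) ^ 2 ≤
      (C * Real.cosh x * Real.sqrt (1 + (C * Real.sinh y) ^ 2)) ^ 2 := by
    have ex : Real.sqrt (1 + (C * Real.sinh x) ^ 2) ^ 2 = 1 + (C * Real.sinh x) ^ 2 :=
      Real.sq_sqrt (by positivity)
    have ey : Real.sqrt (1 + (C * Real.sinh y) ^ 2) ^ 2 = 1 + (C * Real.sinh y) ^ 2 :=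
      Real.sq_sqrt (by positivity)
    have cx2 : Real.cosh x ^ 2 = Real.sinh x ^ 2 + 1 := Real.cosh_sq x
    have cy2 : Real.cosh y ^ 2 = Real.sinh y ^ 2 + 1 := Real.cosh_sq y
    have h2 : Real.sinh x ^ 2 ≤ Real.sinh y ^ 2 := by nlinarith
    have hC2 : 1 ≤ C ^ 2 := by nlinarith
    have key' : (C * Real.cosh y) ^ 2 * (1 + (C * Real.sinh x) ^ 2) ≤
        (C * Real.cosh x) ^ 2 * (1 + (C * Real.sinh y) ^ 2) := by
      have e1 : (C * Real.cosh y) ^ 2 = C ^ 2 * (Real.sinh y ^ 2 + 1) := by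
        rw [mul_pow, cy2]
      have e2 : (C * Real.cosh x) ^ 2 = C ^ 2 * (Real.sinh x ^ 2 + 1) := by
        rw [mul_pow, cx2]
      rw [e1, e2]
      nlinarith [mul_nonneg (mul_nonneg (sq_nonneg C) (sub_nonneg.2 hC2)) (sub_nonneg.2 h2)]
    calc (C * Real.cosh y * Real.sqrt (1 + (C * Real.sinh x) ^ 2)) ^ 2
        = (C * Real.cosh y) ^ 2 * (Real.sqrt (1 + (C * Real.sinh x) ^ 2) ^ 2) := by ring
      _ = (C * Real.cosh y) ^ 2 * (1 + (C * Real.sinh x) ^ 2) := by rw [ex]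
      _ ≤ (C * Real.cosh x) ^ 2 * (1 + (C * Real.sinh y) ^ 2) := key'
      _ = (C * Real.cosh x) ^ 2 * (Real.sqrt (1 + (C * Real.sinh y) ^ 2) ^ 2) := by rw [ey]
      _ = (C * Real.cosh x * Real.sqrt (1 + (C * Real.sinh y) ^ 2)) ^ 2 := by ring
  have h1 : 0 ≤ C * Real.cosh y * Real.sqrt (1 + (C * Real.sinh x) ^ 2) := by positivity
  have h2 : 0 ≤ C * Real.cosh x * Real.sqrt (1 + (C * Real.sinh y) ^ 2) := by positivity
  exact (pow_le_pow_iff_left₀ h1 h2 (by norm_num)).1 key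

theorem arsinh_winding_difference_ge (C t : ℝ) (hC : 1 ≤ C) (ht : 0 < t)
    (k : ℤ) (hk : 1 ≤ k) (α : ℝ) (hα : 0 < α) (hα' : α ≤ 1) :
    Real.arsinh (C * Real.sinh ((k + α) * t)) - Real.arsinh (C * Real.sinh (α * t)) ≥
      Real.arsinh (C * Real.sinh (2 * t)) - Real.arsinh (C * Real.sinh t) := by
  set f : ℝ → ℝ := fun x => Real.arsinh (C * Real.sinh (x * t)) with hf
  set g : ℝ → ℝ := fun x => f (x + 1) - f x with hg
  have hC0 : 0 < C := lt_of_lt_of_le one_pos hC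
  -- derivative of g
  have hgd : ∀ x : ℝ, HasDerivAt g
      ((Real.sqrt (1 + (C * Real.sinh ((x + 1) * t)) ^ 2))⁻¹ * (C * (Real.cosh ((x + 1) * t) * t))
        - (Real.sqrt (1 + (C * Real.sinh (x * t)) ^ 2))⁻¹ * (C * (Real.cosh (x * t) * t))) x := by
    intro x
    have h1 : HasDerivAt (fun x : ℝ => f (x + 1))
        ((Real.sqrt (1 + (C * Real.sinh ((x + 1) * t)) ^ 2))⁻¹
          * (C * (Real.cosh ((x + 1) * t) * t)) * 1) x :=
      by have := (arsinh_sinh_hasDerivAt C t (x + 1)).comp x ((hasDerivAt_id x).add_const 1); exact this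
    rw [mul_one] at h1
    exact h1.sub (arsinh_sinh_hasDerivAt C t x)
  have hdiff : Differentiable ℝ g := fun x => (hgd x).differentiableAt
  have hcont : Continuous g := hdiff.continuous
  have hanti : AntitoneOn g (Set.Icc (0:ℝ) 1) := by
    apply antitoneOn_of_deriv_nonpos (convex_Icc 0 1) hcont.continuousOn
      (fun x _ => hdiff.differentiableAt.differentiableWithinAt)
    intro x hx
    rw [interior_Icc] at hx
    rw [(hgd x).deriv]
    have h := core_antitone C hC (show (0:ℝ) ≤ x * t from mul_nonneg hx.1.le ht.le)
      (show x * t ≤ (x + 1) * t by nlinarith [hx.1, hx.2])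
    have h2 := mul_le_mul_of_nonneg_right h ht.le
    nlinarith [h2]
  -- g 1 ≤ g α
  have hga : g 1 ≤ g α := hanti ⟨hα.le, hα'⟩ ⟨zero_le_one, le_refl 1⟩ hα'
  -- f (α + 1) ≤ f (k + α)
  have hk1 : (1:ℝ) ≤ (k:ℝ) := by exact_mod_cast hk
  have hmono : f (α + 1) ≤ f ((k:ℝ) + α) := by
    apply Real.arsinh_le_arsinh.2
    apply mul_le_mul_of_nonneg_left _ hC0.le
    apply Real.sinh_le_sinh.2
    nlinarith
  have hg1 : g 1 = Real.arsinh (C * Real.sinh (2 * t)) - Real.arsinh (C * Real.sinh t) := by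
    simp only [hg, hf]
    norm_num
  have hgα : g α = f (α + 1) - f α := rfl
  have hfα : f α = Real.arsinh (C * Real.sinh (α * t)) := rfl
  have hfk : f ((k:ℝ) + α) = Real.arsinh (C * Real.sinh (((k:ℝ) + α) * t)) := rfl
  rw [ge_iff_le, ← hg1, ← hfα, ← hfk]
  linarith [hga, hmono, hgα.ge, hgα.le]
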